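/- Let (M, η, μ) be a monad on a category C with binary coproducts. The triple (M^s, η^s, μ^s) with M^s = Id + M, η^s = inl, and μ^s = [id, inr ∘ μ ∘ M[η, id_M]] is a monad on C (the semifree monad on M). -/

import Mathlib

open CategoryTheory CategoryTheory.Limits

universe v u

variable {C : Type u} [Category.{v} C] [HasBinaryCoproducts C]

/-- The underlying functor `Id + M` of the semifree monad. -/
noncomputable def MsF (M : Monad C) : C ⥤ C where
  obj X := X ⨿ M.obj X
  map f := coprod.map f (M.map f)

/-- The unit of the semifree monad: the left coproduct injection. -/
noncomputable def ηs (M : Monad C) (X : C) : X ⟶ (MsF M).obj X := coprod.inl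

/-- The multiplication of the semifree monad:
`μ^s = [id, inr ∘ μ ∘ M[η, id_M]]`. -/
noncomputable def μs (M : Monad C) (X : C) : (MsF M).obj ((MsF M).obj X) ⟶ (MsF M).obj X :=
  coprod.desc (𝟙 ((MsF M).obj X))
    (M.map (coprod.desc (M.η.app X) (𝟙 (M.obj X))) ≫ M.μ.app X ≫ coprod.inr)
/-- The triple `(M^s, η^s, μ^s)` is a monad: the unit and the multiplication are
natural transformations with the prescribed components, and the three monad laws hold. -/
theorem semifree_isMonad (M : Monad C) :
    ∃ (η' : 𝟭 C ⟶ MsF M) (μ' : MsF M ⋙ MsF M ⟶ MsF M),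
      (∀ X : C, η'.app X = ηs M X) ∧
      (∀ X : C, μ'.app X = μs M X) ∧
      (∀ X : C, (MsF M).map (η'.app X) ≫ μ'.app X = 𝟙 ((MsF M).obj X)) ∧
      (∀ X : C, η'.app ((MsF M).obj X) ≫ μ'.app X = 𝟙 ((MsF M).obj X)) ∧
      (∀ X : C, μ'.app ((MsF M).obj X) ≫ μ'.app X =
        (MsF M).map (μ'.app X) ≫ μ'.app X) := by
  refine ⟨⟨fun X => ηs M X, ?_⟩, ⟨fun X => μs M X, ?_⟩, fun _ => rfl, fun _ => rfl, ?_, ?_, ?_⟩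
  · intro X Y f
    simp [MsF, ηs]
  · intro X Y f
    dsimp [MsF, μs]
    apply coprod.hom_ext
    · simp [coprod.inl_desc, coprod.inr_desc, coprod.inl_desc_assoc, coprod.inr_desc_assoc]
    · simp only [coprod.inr_map_assoc, coprod.inr_desc, coprod.inr_desc_assoc, Category.assoc,
        coprod.inr_map, ← Functor.map_comp_assoc, coprod.map_desc, Category.comp_id]
      rw [show coprod.desc (f ≫ M.η.app Y) (M.map f) =
          coprod.desc (M.η.app X) (𝟙 _) ≫ M.map f by
            apply coprod.hom_ext
            · simpa [coprod.inl_desc, coprod.inr_desc, coprod.inl_desc_assoc, coprod.inr_desc_assoc] using M.η.naturality f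
            · simp [coprod.inl_desc, coprod.inr_desc, coprod.inl_desc_assoc, coprod.inr_desc_assoc]]
      rw [Functor.map_comp_assoc,
        show M.map (M.map f) ≫ M.μ.app Y ≫ coprod.inr =
          M.μ.app X ≫ M.map f ≫ coprod.inr from M.μ.naturality_assoc f _]
      rfl
  · intro X
    dsimp [MsF, μs, ηs]
    ext
    · simp [coprod.inl_desc, coprod.inr_desc, coprod.inl_desc_assoc, coprod.inr_desc_assoc]
    · simp [coprod.inl_desc, coprod.inr_desc, coprod.inl_desc_assoc, coprod.inr_desc_assoc, ← Functor.map_comp_assoc]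
  · intro X
    simp [MsF, μs, ηs, coprod.inl_desc, coprod.inr_desc, coprod.inl_desc_assoc, coprod.inr_desc_assoc]
    exact coprod.inl_desc _ _
  · intro X
    dsimp [MsF, μs, ηs]
    apply coprod.hom_ext
    · simp [coprod.inl_desc, coprod.inr_desc, coprod.inl_desc_assoc, coprod.inr_desc_assoc]
    · simp only [coprod.inr_desc_assoc, coprod.inr_map_assoc, coprod.inr_desc, Category.assoc]
      rw [← M.μ.naturality_assoc]
      dsimp only [Functor.comp_map]
      slice_lhs 3 4 => rw [← M.assoc X]
      simp only [← Functor.map_comp_assoc, Category.assoc]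
      congr 2
      apply coprod.hom_ext
      · simp only [coprod.inl_desc_assoc, coprod.inl_desc, Category.comp_id]
        rw [← M.η.naturality_assoc]
        simp
      · simp [coprod.inl_desc, coprod.inr_desc, coprod.inl_desc_assoc, coprod.inr_desc_assoc]
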